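/- Let ξ ∈ ℝ³ with ξ ≠ 0 and let a be a symmetric 3×3 real matrix. Then the following are equivalent: (i) vᵀ a w = 0 for all v, w ∈ ℝ³ with v·ξ = 0 and w·ξ = 0; (ii) there exists b ∈ ℝ³ with a = b ξᵀ + ξ bᵀ. Moreover, the vector b in (ii) is unique. -/

import Mathlib

open Matrix

/-- For `ξ ≠ 0` and a symmetric `3×3` matrix `a`: the quadratic form of
`a` vanishes on the orthogonal complement of `ξ` iff `a = b ξᵀ + ξ bᵀ` for some `b`;
moreover such a `b` is unique. -/
theorem stmt_8 (ξ : Fin 3 → ℝ) (hξ : ξ ≠ 0)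
    (a : Matrix (Fin 3) (Fin 3) ℝ) (ha : aᵀ = a) :
    ((∀ v w : Fin 3 → ℝ, v ⬝ᵥ ξ = 0 → w ⬝ᵥ ξ = 0 → v ⬝ᵥ (a *ᵥ w) = 0) ↔
      ∃ b : Fin 3 → ℝ, a = vecMulVec b ξ + vecMulVec ξ b) ∧
    (∀ b b' : Fin 3 → ℝ, a = vecMulVec b ξ + vecMulVec ξ b →
      a = vecMulVec b' ξ + vecMulVec ξ b' → b = b') := by
  have hs : ξ ⬝ᵥ ξ ≠ 0 := by
    intro h0
    exact hξ (by
      funext k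
      have := Finset.sum_eq_zero_iff_of_nonneg (fun i _ => mul_self_nonneg (ξ i)) |>.mp h0 k (Finset.mem_univ k)
      have : ξ k = 0 := by nlinarith [this]
      simpa using this)
  set s := ξ ⬝ᵥ ξ with hsdef
  constructor
  · constructor
    · intro h
      set u := a *ᵥ ξ with hu
      set q := ξ ⬝ᵥ u with hq
      have hξa : ∀ x : Fin 3 → ℝ, ξ ⬝ᵥ (a *ᵥ x) = u ⬝ᵥ x := by
        intro x
        rw [dotProduct_mulVec, ← ha, vecMul_transpose]
      refine ⟨s⁻¹ • u - (q / (2 * s ^ 2)) • ξ, ?_⟩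
      ext i j
      have key := h (Pi.single i 1 - (ξ i / s) • ξ) (Pi.single j 1 - (ξ j / s) • ξ)
        (by rw [sub_dotProduct, smul_dotProduct, single_dotProduct, ← hsdef, smul_eq_mul]; field_simp; simp)
        (by rw [sub_dotProduct, smul_dotProduct, single_dotProduct, ← hsdef, smul_eq_mul]; field_simp; simp)
      rw [mulVec_sub, mulVec_smul, dotProduct_sub, sub_dotProduct, sub_dotProduct,
        dotProduct_smul, dotProduct_smul, smul_dotProduct, smul_dotProduct] at key
      rw [hξa, hξa] at key
      have e1 : Pi.single i 1 ⬝ᵥ (a *ᵥ Pi.single j (1:ℝ)) = a i j := by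
        simp [single_dotProduct, mulVec_single]
      have e2 : Pi.single i 1 ⬝ᵥ (a *ᵥ ξ) = u i := by simp [single_dotProduct, hu]
      have e3 : u ⬝ᵥ Pi.single j (1:ℝ) = u j := by simp [dotProduct_single]
      have e4 : u ⬝ᵥ ξ = q := by rw [hq, dotProduct_comm]
      rw [e1, e2, e3, e4] at key
      simp only [Matrix.add_apply, vecMulVec_apply, Pi.sub_apply, Pi.smul_apply, smul_eq_mul] at key ⊢
      field_simp at key ⊢
      have key3 : a i j * s ^ 2 + ξ i * ξ j * q - s * ξ i * u j - s * ξ j * u i = 0 := by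
        apply mul_left_cancel₀ (pow_ne_zero 2 hs)
        rw [mul_zero]
        linear_combination s ^ 2 * key
      linear_combination 2 * key3
    · rintro ⟨b, rfl⟩ v w hv hw
      have expand : v ⬝ᵥ ((vecMulVec b ξ + vecMulVec ξ b) *ᵥ w)
          = (v ⬝ᵥ b) * (ξ ⬝ᵥ w) + (v ⬝ᵥ ξ) * (b ⬝ᵥ w) := by
        simp [dotProduct, mulVec, vecMulVec_apply, Fin.sum_univ_three]
        ring
      rw [expand, hv, dotProduct_comm ξ w, hw]
      ring
  · intro b b' h1 h2
    have hE : ∀ i j, b i * ξ j + ξ i * b j = b' i * ξ j + ξ i * b' j := by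
      intro i j
      have := congrFun (congrFun (h1.symm.trans h2) i) j
      simpa [Matrix.add_apply, vecMulVec_apply] using this
    obtain ⟨k, hk⟩ : ∃ k, ξ k ≠ 0 := by
      by_contra hc
      push_neg at hc
      exact hξ (funext hc)
    have hbk : b k = b' k := by
      have := hE k k
      have h2 : 2 * (b k * ξ k) = 2 * (b' k * ξ k) := by ring_nf; ring_nf at this; linarith
      have := mul_right_cancel₀ hk (by linarith : b k * ξ k = b' k * ξ k)
      exact this
    funext i
    have := hE i k
    rw [hbk] at this
    have : b i * ξ k = b' i * ξ k := by linarith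
    exact mul_right_cancel₀ hk this
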